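/- (Dowker's ratio ergodic theorem) Suppose X is a Borel space, f : X → ℝ, g : X → (0,∞), T : X → X, w : X → (0,∞) are Borel, S_g^n(x) → ∞ for all x, and μ is a T-conservative T-w-invariant Borel measure with f and g μ-integrable. Then the limit L(x) = lim_n S_f^n(x)/S_g^n(x) exists μ-almost everywhere, g·L is μ-integrable, and ∫ f dμ = ∫ g·L dμ. -/

import Mathlib

open Finset Filter MeasureTheory

noncomputable def cocycle {X : Type*} (T : X → X) (w : X → ℝ) (x : X) (k : ℕ) : ℝ :=
  ∏ j ∈ Finset.range k, w (T^[j] x)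

noncomputable def wSum {X : Type*} (T : X → X) (w : X → ℝ) (h : X → ℝ) (n : ℕ) (x : X) : ℝ :=
  ∑ k ∈ Finset.range n, h (T^[k] x) * cocycle T w x k

noncomputable def ratio {X : Type*} (T : X → X) (w f g : X → ℝ) (n : ℕ) (x : X) : ℝ :=
  wSum T w f n x / wSum T w g n x

def IsWandering {X : Type*} (T : X → X) (W : Set X) : Prop :=
  ∀ x : X, (W ∩ Set.range fun k : ℕ => T^[k] x).Subsingleton

def IsConservative {X : Type*} [MeasurableSpace X] (T : X → X)
    (μ : Measure X) : Prop :=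
  ∀ W : Set X, MeasurableSet W → IsWandering T W → μ W = 0

def IsTWInvariant {X : Type*} [MeasurableSpace X] (T : X → X) (w : X → ℝ)
    (μ : Measure X) : Prop :=
  ∀ B : Set X, MeasurableSet B →
    μ B = ∫⁻ x in T ⁻¹' B, ENNReal.ofReal (w x) ∂μ


open Finset Filter MeasureTheory


section Alg
variable {X : Type*} {T : X → X} {w : X → ℝ}

lemma cocycle_pos (hw : ∀ x, 0 < w x) (x : X) (k : ℕ) : 0 < cocycle T w x k :=
  Finset.prod_pos fun j _ => hw _

lemma cocycle_succ' (x : X) (k : ℕ) :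
    cocycle T w x (k + 1) = w x * cocycle T w (T x) k := by
  unfold cocycle
  rw [Finset.prod_range_succ']
  simp only [Function.iterate_succ_apply, Function.iterate_zero_apply]
  ring

lemma wSum_zero (h : X → ℝ) (x : X) : wSum T w h 0 x = 0 := by simp [wSum]

lemma wSum_succ' (h : X → ℝ) (n : ℕ) (x : X) :
    wSum T w h (n + 1) x = h x + w x * wSum T w h n (T x) := by
  unfold wSum
  rw [Finset.sum_range_succ']
  have e : ∀ k, h (T^[k + 1] x) * cocycle T w x (k + 1)
      = w x * (h (T^[k] (T x)) * cocycle T w (T x) k) := by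
    intro k
    rw [cocycle_succ', Function.iterate_succ_apply]
    ring
  rw [Finset.sum_congr rfl fun k _ => e k, ← Finset.mul_sum]
  simp [cocycle]
  ring

lemma wSum_nonneg {h : X → ℝ} (hh : ∀ y, 0 ≤ h y) (hw : ∀ x, 0 < w x) (n : ℕ) (x : X) :
    0 ≤ wSum T w h n x :=
  Finset.sum_nonneg fun k _ => mul_nonneg (hh _) (cocycle_pos hw x k).le

lemma wSum_sub (f g : X → ℝ) (b : ℝ) (n : ℕ) (x : X) :
    wSum T w (fun y => f y - b * g y) n x = wSum T w f n x - b * wSum T w g n x := by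
  unfold wSum
  rw [Finset.mul_sum, ← Finset.sum_sub_distrib]
  exact Finset.sum_congr rfl fun k _ => by ring

lemma wSum_neg (f : X → ℝ) (n : ℕ) (x : X) :
    wSum T w (fun y => -f y) n x = -wSum T w f n x := by
  unfold wSum
  rw [← Finset.sum_neg_distrib]
  exact Finset.sum_congr rfl fun k _ => by ring

lemma iterate_mem_invariant {A : Set X} (hA : T ⁻¹' A = A) (x : X) (k : ℕ) :
    T^[k] x ∈ A ↔ x ∈ A := by
  induction k with
  | zero => simp
  | succ k ih => rw [Function.iterate_succ_apply', ← Set.mem_preimage, hA, ih]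

lemma wSum_indicator {A : Set X} (hA : T ⁻¹' A = A) (h : X → ℝ) (n : ℕ) (x : X) :
    wSum T w (A.indicator h) n x = A.indicator (fun y => wSum T w h n y) x := by
  by_cases hx : x ∈ A
  · rw [Set.indicator_of_mem hx]
    exact Finset.sum_congr rfl fun k _ => by
      rw [Set.indicator_of_mem ((iterate_mem_invariant hA x k).2 hx)]
  · rw [Set.indicator_of_notMem hx]
    exact Finset.sum_eq_zero fun k _ => by
      rw [Set.indicator_of_notMem fun h' => hx ((iterate_mem_invariant hA x k).1 h'), zero_mul]

variable [MeasurableSpace X]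

lemma measurable_cocycle (hT : Measurable T) (hwm : Measurable w) (k : ℕ) :
    Measurable fun x => cocycle T w x k :=
  Finset.measurable_prod _ fun j _ => hwm.comp (hT.iterate j)

lemma measurable_wSum (hT : Measurable T) (hwm : Measurable w) {h : X → ℝ}
    (hh : Measurable h) (n : ℕ) : Measurable (wSum T w h n) :=
  Finset.measurable_sum _ fun k _ =>
    ((hh.comp (hT.iterate k)).mul (measurable_cocycle hT hwm k))

end Alg

section Transfer
variable {X : Type*} [MeasurableSpace X] {T : X → X} {w : X → ℝ} {μ : MeasureTheory.Measure X}
open MeasureTheory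

lemma map_withDensity_eq (hT : Measurable T) (hinv : IsTWInvariant T w μ) :
    Measure.map T (μ.withDensity fun x => ENNReal.ofReal (w x)) = μ := by
  ext B hB
  rw [Measure.map_apply hT hB, withDensity_apply _ (hT hB)]
  exact (hinv B hB).symm

lemma lintegral_transfer (hT : Measurable T) (hwm : Measurable w)
    (hinv : IsTWInvariant T w μ) {h : X → ENNReal} (hh : Measurable h) :
    ∫⁻ x, ENNReal.ofReal (w x) * h (T x) ∂μ = ∫⁻ x, h x ∂μ := by
  conv_rhs => rw [← map_withDensity_eq hT hinv]
  rw [lintegral_map hh hT]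
  rw [show (fun a => h (T a)) = (h ∘ T) from rfl,
    lintegral_withDensity_eq_lintegral_mul _ (hwm.ennreal_ofReal) (hh.comp hT)]
  rfl

lemma comp_nonneg (hT : Measurable T) (hwm : Measurable w) (hw : ∀ x, 0 < w x)
    (hinv : IsTWInvariant T w μ) {F : X → ℝ} (hFm : Measurable F) (hF0 : ∀ x, 0 ≤ F x)
    (hFi : Integrable F μ) :
    Integrable (fun x => w x * F (T x)) μ ∧
      ∫ x, w x * F (T x) ∂μ = ∫ x, F x ∂μ := by
  have key : ∫⁻ x, ENNReal.ofReal (w x * F (T x)) ∂μ = ∫⁻ x, ENNReal.ofReal (F x) ∂μ := by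
    have e : ∀ x, ENNReal.ofReal (w x * F (T x))
        = ENNReal.ofReal (w x) * ENNReal.ofReal (F (T x)) := fun x =>
      ENNReal.ofReal_mul (hw x).le
    simp_rw [e]
    exact lintegral_transfer hT hwm hinv (hFm.ennreal_ofReal)
  have hfin : ∫⁻ x, ENNReal.ofReal (F x) ∂μ < ⊤ :=
    (hasFiniteIntegral_iff_ofReal (Filter.Eventually.of_forall hF0)).1 hFi.2
  have hm : Measurable fun x => w x * F (T x) := hwm.mul (hFm.comp hT)
  have h0 : ∀ x, 0 ≤ w x * F (T x) := fun x => mul_nonneg (hw x).le (hF0 _)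
  have hi : Integrable (fun x => w x * F (T x)) μ :=
    ⟨hm.aestronglyMeasurable,
      (hasFiniteIntegral_iff_ofReal (Filter.Eventually.of_forall h0)).2 (key ▸ hfin)⟩
  refine ⟨hi, ?_⟩
  rw [integral_eq_lintegral_of_nonneg_ae (Filter.Eventually.of_forall h0)
      hm.aestronglyMeasurable,
    integral_eq_lintegral_of_nonneg_ae (Filter.Eventually.of_forall hF0)
      hFm.aestronglyMeasurable, key]

lemma integrable_P (hT : Measurable T) (hwm : Measurable w) (hw : ∀ x, 0 < w x)
    (hinv : IsTWInvariant T w μ) {F : X → ℝ} (hFm : Measurable F) (hFi : Integrable F μ) :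
    Integrable (fun x => w x * F (T x)) μ := by
  have habs := (comp_nonneg hT hwm hw hinv hFm.abs (fun x => abs_nonneg _) hFi.abs).1
  refine habs.mono' (hwm.mul (hFm.comp hT)).aestronglyMeasurable ?_
  refine Filter.Eventually.of_forall fun x => ?_
  rw [Real.norm_eq_abs, abs_mul, abs_of_pos (hw x)]

end Transfer
section Hopf
open MeasureTheory
variable {X : Type*} [MeasurableSpace X] {T : X → X} {w : X → ℝ} {μ : MeasureTheory.Measure X}

noncomputable def maxS (T : X → X) (w F : X → ℝ) : ℕ → X → ℝ
  | 0 => fun _ => 0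
  | (N + 1) => fun x => max (maxS T w F N x) (wSum T w F (N + 1) x)

lemma maxS_nonneg (F : X → ℝ) (N : ℕ) (x : X) : 0 ≤ maxS T w F N x := by
  induction N with
  | zero => exact le_refl 0
  | succ N ih => exact le_trans ih (le_max_left _ _)

lemma wSum_le_maxS (F : X → ℝ) {k N : ℕ} (hk : k ≤ N) (x : X) :
    wSum T w F k x ≤ maxS T w F N x := by
  induction N with
  | zero =>
    interval_cases k
    rw [wSum_zero]
    exact le_refl 0
  | succ N ih =>
    rcases Nat.lt_succ_iff_lt_or_eq.1 (Nat.lt_succ_of_le hk) with h | h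
    · exact le_trans (ih (Nat.lt_succ_iff.1 h)) (le_max_left _ _)
    · rw [h]; exact le_max_right _ _

lemma maxS_pos_exists (F : X → ℝ) {N : ℕ} {x : X} (h : 0 < maxS T w F N x) :
    ∃ n, 1 ≤ n ∧ n ≤ N ∧ maxS T w F N x ≤ wSum T w F n x := by
  induction N with
  | zero => exact absurd h (lt_irrefl 0)
  | succ N ih =>
    rcases le_or_gt (wSum T w F (N + 1) x) (maxS T w F N x) with h1 | h1
    · have he : maxS T w F (N + 1) x = maxS T w F N x := max_eq_left h1
      rw [he] at h ⊢
      obtain ⟨n, hn1, hn2, hn3⟩ := ih h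
      exact ⟨n, hn1, le_trans hn2 (Nat.le_succ N), hn3⟩
    · have he : maxS T w F (N + 1) x = wSum T w F (N + 1) x := max_eq_right h1.le
      exact ⟨N + 1, Nat.succ_le_succ (Nat.zero_le N), le_refl _, he.le⟩

lemma measurable_maxS (hT : Measurable T) (hwm : Measurable w) {F : X → ℝ}
    (hFm : Measurable F) (N : ℕ) : Measurable (maxS T w F N) := by
  induction N with
  | zero => exact measurable_const
  | succ N ih => exact ih.max (measurable_wSum hT hwm hFm (N + 1))

end Hopf
section Hopf2
open MeasureTheory
variable {X : Type*} [MeasurableSpace X] {T : X → X} {w : X → ℝ} {μ : MeasureTheory.Measure X}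

lemma wTerm_succ (F : X → ℝ) (k : ℕ) (x : X) :
    F (T^[k + 1] x) * cocycle T w x (k + 1)
      = w x * (F (T^[k] (T x)) * cocycle T w (T x) k) := by
  rw [cocycle_succ', Function.iterate_succ_apply]
  ring

lemma integrable_wTerm (hT : Measurable T) (hwm : Measurable w) (hw : ∀ x, 0 < w x)
    (hinv : IsTWInvariant T w μ) {F : X → ℝ} (hFm : Measurable F) (hFi : Integrable F μ)
    (k : ℕ) : Integrable (fun x => F (T^[k] x) * cocycle T w x k) μ := by
  induction k with
  | zero => simpa [cocycle] using hFi
  | succ k ih =>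
    have h := integrable_P hT hwm hw hinv
      ((hFm.comp (hT.iterate k)).mul (measurable_cocycle hT hwm k)) ih
    refine h.congr (Filter.Eventually.of_forall fun x => ?_)
    exact (wTerm_succ F k x).symm

lemma integrable_wSum (hT : Measurable T) (hwm : Measurable w) (hw : ∀ x, 0 < w x)
    (hinv : IsTWInvariant T w μ) {F : X → ℝ} (hFm : Measurable F) (hFi : Integrable F μ)
    (n : ℕ) : Integrable (wSum T w F n) μ := by
  have : Integrable (fun x => ∑ k ∈ Finset.range n, F (T^[k] x) * cocycle T w x k) μ :=
    integrable_finset_sum _ fun k _ => integrable_wTerm hT hwm hw hinv hFm hFi k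
  exact this

lemma integrable_maxS (hT : Measurable T) (hwm : Measurable w) (hw : ∀ x, 0 < w x)
    (hinv : IsTWInvariant T w μ) {F : X → ℝ} (hFm : Measurable F) (hFi : Integrable F μ)
    (N : ℕ) : Integrable (maxS T w F N) μ := by
  induction N with
  | zero => simpa [maxS] using (integrable_const (0:ℝ))
  | succ N ih =>
    have h := ih.sup (integrable_wSum hT hwm hw hinv hFm hFi (N + 1))
    refine h.congr (Filter.Eventually.of_forall fun x => ?_)
    rw [Pi.sup_apply]
    rfl

lemma maxS_mono (F : X → ℝ) (x : X) : Monotone fun N => maxS T w F N x :=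
  monotone_nat_of_le_succ fun N => le_max_left _ _

lemma hopf_max (hT : Measurable T) (hwm : Measurable w) (hw : ∀ x, 0 < w x)
    (hinv : IsTWInvariant T w μ) {F : X → ℝ} (hFm : Measurable F) (hFi : Integrable F μ)
    (N : ℕ) : 0 ≤ ∫ x in {x | 0 < maxS T w F N x}, F x ∂μ := by
  set M := maxS T w F N with hM
  set E := {x | 0 < M x} with hE
  have hMm : Measurable M := measurable_maxS hT hwm hFm N
  have hEm : MeasurableSet E := measurableSet_lt measurable_const hMm
  have hMi : Integrable M μ := integrable_maxS hT hwm hw hinv hFm hFi N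
  have hM0 : ∀ x, 0 ≤ M x := maxS_nonneg F N
  obtain ⟨hPMi, hPMeq⟩ := comp_nonneg hT hwm hw hinv hMm hM0 hMi
  have hpt : ∀ x ∈ E, M x - w x * M (T x) ≤ F x := by
    intro x hx
    obtain ⟨n, hn1, hn2, hn3⟩ := maxS_pos_exists F hx
    obtain ⟨m, rfl⟩ := Nat.exists_eq_add_of_le hn1
    have e : wSum T w F (1 + m) x = F x + w x * wSum T w F m (T x) := by
      rw [Nat.add_comm]; exact wSum_succ' F m x
    have h4 : wSum T w F m (T x) ≤ M (T x) :=
      wSum_le_maxS F (le_trans (Nat.le_add_left m 1) hn2) (T x)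
    have h5 := mul_le_mul_of_nonneg_left h4 (hw x).le
    rw [e] at hn3
    linarith
  have step1 : ∫ x in E, (M x - w x * M (T x)) ∂μ ≤ ∫ x in E, F x ∂μ :=
    setIntegral_mono_on ((hMi.sub hPMi).integrableOn) hFi.integrableOn hEm hpt
  have e1 : ∫ x in E, (M x - w x * M (T x)) ∂μ
      = ∫ x in E, M x ∂μ - ∫ x in E, w x * M (T x) ∂μ :=
    integral_sub hMi.integrableOn hPMi.integrableOn
  have e2 : ∫ x in E, M x ∂μ = ∫ x, M x ∂μ := by
    rw [← integral_add_compl hEm hMi]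
    have hz : ∫ x in Eᶜ, M x ∂μ = 0 := by
      rw [setIntegral_congr_fun hEm.compl (g := fun _ => (0 : ℝ))
        (fun x hx => le_antisymm (not_lt.1 hx) (hM0 x)), integral_zero]
    rw [hz, add_zero]
  have e3 : ∫ x in E, w x * M (T x) ∂μ ≤ ∫ x, w x * M (T x) ∂μ :=
    setIntegral_le_integral hPMi
      (Filter.Eventually.of_forall fun x => mul_nonneg (hw x).le (hM0 _))
  linarith

lemma hopf (hT : Measurable T) (hwm : Measurable w) (hw : ∀ x, 0 < w x)
    (hinv : IsTWInvariant T w μ) {F : X → ℝ} (hFm : Measurable F) (hFi : Integrable F μ) :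
    0 ≤ ∫ x in {x | ∃ n, 0 < wSum T w F n x}, F x ∂μ := by
  set E := fun N => {x | 0 < maxS T w F N x} with hEdef
  have hEm : ∀ N, MeasurableSet (E N) := fun N =>
    measurableSet_lt measurable_const (measurable_maxS hT hwm hFm N)
  have hmono : Monotone E := fun N M hNM x hx =>
    lt_of_lt_of_le hx (maxS_mono F x hNM)
  have hset : ⋃ N, E N = {x | ∃ n, 0 < wSum T w F n x} := by
    ext x
    simp only [hEdef, Set.mem_iUnion, Set.mem_setOf_eq]
    constructor
    · rintro ⟨N, hN⟩
      obtain ⟨n, _, _, h3⟩ := maxS_pos_exists F hN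
      exact ⟨n, lt_of_lt_of_le hN h3⟩
    · rintro ⟨n, hn⟩
      exact ⟨n, lt_of_lt_of_le hn (wSum_le_maxS F (le_refl n) x)⟩
  have htend := tendsto_setIntegral_of_monotone hEm hmono
    (hFi.integrableOn : IntegrableOn F (⋃ N, E N) μ)
  rw [hset] at htend
  exact ge_of_tendsto htend
    (Filter.Eventually.of_forall fun N => hopf_max hT hwm hw hinv hFm hFi N)

lemma hopf_invariant (hT : Measurable T) (hwm : Measurable w) (hw : ∀ x, 0 < w x)
    (hinv : IsTWInvariant T w μ) {F : X → ℝ} (hFm : Measurable F) (hFi : Integrable F μ)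
    {A : Set X} (hA : MeasurableSet A) (hAinv : T ⁻¹' A = A)
    (hpos : ∀ x ∈ A, ∃ n, 0 < wSum T w F n x) :
    0 ≤ ∫ x in A, F x ∂μ := by
  have h := hopf hT hwm hw hinv (hFm.indicator hA) (hFi.indicator hA)
  have hset : {x | ∃ n, 0 < wSum T w (A.indicator F) n x} = A := by
    ext x
    simp only [Set.mem_setOf_eq]
    constructor
    · rintro ⟨n, hn⟩
      rw [wSum_indicator hAinv] at hn
      by_contra hx
      rw [Set.indicator_of_notMem hx] at hn
      exact lt_irrefl 0 hn
    · intro hx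
      obtain ⟨n, hn⟩ := hpos x hx
      refine ⟨n, ?_⟩
      rw [wSum_indicator hAinv, Set.indicator_of_mem hx]
      exact hn
  rw [hset] at h
  rwa [setIntegral_congr_fun hA (fun x hx => Set.indicator_of_mem hx F)] at h

end Hopf2
section ERealLim
open Filter

lemma limsup_perturb (a b : ℕ → ℝ) (c d : ℝ) (hb : Tendsto b atTop atTop) :
    limsup (fun n => (((a n - c) / (b n - d) : ℝ) : EReal)) atTop
      ≤ limsup (fun n => ((a n / b n : ℝ) : EReal)) atTop := by
  set L := limsup (fun n => ((a n / b n : ℝ) : EReal)) atTop with hL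
  by_contra hcon
  push_neg at hcon
  obtain ⟨q, hq1, hq2⟩ := EReal.exists_between_coe_real hcon
  obtain ⟨q', hq'1, hq'2⟩ := EReal.exists_between_coe_real hq2
  have hqq' : q < q' := EReal.coe_lt_coe_iff.1 hq'1
  have hev1 : ∀ᶠ n in atTop, ((a n / b n : ℝ) : EReal) < (q : EReal) :=
    eventually_lt_of_limsup_lt hq1
  have hev2 : ∀ᶠ n in atTop, max (max 0 d) (d + |q * d - c| / (q' - q)) < b n :=
    hb.eventually_gt_atTop _
  have hev : ∀ᶠ n in atTop, (((a n - c) / (b n - d) : ℝ) : EReal) ≤ (q' : EReal) := by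
    filter_upwards [hev1, hev2] with n h1 h2
    rw [EReal.coe_lt_coe_iff] at h1
    rw [EReal.coe_le_coe_iff]
    have hb0 : 0 < b n :=
      lt_of_le_of_lt ((le_max_left 0 d).trans (le_max_left _ _)) h2
    have hbd : 0 < b n - d :=
      sub_pos.2 (lt_of_le_of_lt ((le_max_right 0 d).trans (le_max_left _ _)) h2)
    have han : a n < q * b n := (div_lt_iff₀ hb0).1 h1
    have hden : |q * d - c| ≤ (b n - d) * (q' - q) := by
      have h3 : d + |q * d - c| / (q' - q) < b n := lt_of_le_of_lt (le_max_right _ _) h2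
      have h4 : |q * d - c| / (q' - q) < b n - d := by linarith
      exact ((div_lt_iff₀ (sub_pos.2 hqq')).1 h4).le
    rw [div_le_iff₀ hbd]
    nlinarith [le_abs_self (q * d - c)]
  have hfin : limsup (fun n => (((a n - c) / (b n - d) : ℝ) : EReal)) atTop ≤ (q' : EReal) :=
    limsup_le_of_le (by isBoundedDefault) hev
  exact absurd (lt_of_lt_of_le hq'2 hfin) (lt_irrefl _)

lemma limsup_perturb_eq (a b : ℕ → ℝ) (c d : ℝ) (hb : Tendsto b atTop atTop) :
    limsup (fun n => (((a n - c) / (b n - d) : ℝ) : EReal)) atTop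
      = limsup (fun n => ((a n / b n : ℝ) : EReal)) atTop := by
  refine le_antisymm (limsup_perturb a b c d hb) ?_
  have hb' : Tendsto (fun n => b n - d) atTop atTop := by
    simpa [sub_eq_add_neg] using tendsto_atTop_add_const_right atTop (-d) hb
  have h2 := limsup_perturb (fun n => a n - c) (fun n => b n - d) (-c) (-d) hb'
  simpa [sub_neg_eq_add, sub_add_cancel] using h2

end ERealLim

section Phi
open Filter MeasureTheory
variable {X : Type*} {T : X → X} {w f g : X → ℝ}

noncomputable def PhiSup (T : X → X) (w f g : X → ℝ) (x : X) : EReal :=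
  limsup (fun n => ((wSum T w f n x / wSum T w g n x : ℝ) : EReal)) atTop

lemma phiSup_comp (hw : ∀ x, 0 < w x) {x : X}
    (hdivx : Tendsto (fun n => wSum T w g n x) atTop atTop) :
    PhiSup T w f g (T x) = PhiSup T w f g x := by
  have key : ∀ n, wSum T w f n (T x) / wSum T w g n (T x)
      = (wSum T w f (n + 1) x - f x) / (wSum T w g (n + 1) x - g x) := by
    intro n
    rw [wSum_succ' f n x, wSum_succ' g n x, add_sub_cancel_left, add_sub_cancel_left,
      mul_div_mul_left _ _ (ne_of_gt (hw x))]
  unfold PhiSup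
  simp_rw [key]
  have hshift := limsup_nat_add
    (fun n => (((wSum T w f n x - f x) / (wSum T w g n x - g x) : ℝ) : EReal)) 1
  calc limsup (fun n : ℕ => (((wSum T w f (n + 1) x - f x)
        / (wSum T w g (n + 1) x - g x) : ℝ) : EReal)) atTop
      = limsup (fun n : ℕ => (((wSum T w f n x - f x)
        / (wSum T w g n x - g x) : ℝ) : EReal)) atTop := hshift
    _ = limsup (fun n => ((wSum T w f n x / wSum T w g n x : ℝ) : EReal)) atTop :=
        limsup_perturb_eq _ _ (f x) (g x) hdivx

variable [MeasurableSpace X]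

lemma measurable_phiSup (hT : Measurable T) (hwm : Measurable w)
    (hf : Measurable f) (hgm : Measurable g) : Measurable (PhiSup T w f g) :=
  Measurable.limsup fun n =>
    measurable_coe_real_ereal.comp
      ((measurable_wSum hT hwm hf n).div (measurable_wSum hT hwm hgm n))

lemma phiSup_neg (x : X) :
    PhiSup T w (fun y => -f y) g x
      = - liminf (fun n => ((wSum T w f n x / wSum T w g n x : ℝ) : EReal)) atTop := by
  unfold PhiSup
  simp_rw [wSum_neg, neg_div, EReal.coe_neg]
  rw [show (fun n => -((wSum T w f n x / wSum T w g n x : ℝ) : EReal))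
      = -(fun n => ((wSum T w f n x / wSum T w g n x : ℝ) : EReal)) from rfl,
    EReal.limsup_neg]

lemma exists_pos_of_lt_phiSup {b : ℝ} {x : X}
    (hb : (b : EReal) < PhiSup T w f g x)
    (hdivx : Tendsto (fun n => wSum T w g n x) atTop atTop) :
    ∃ n, 0 < wSum T w (fun y => f y - b * g y) n x := by
  have h1 : ∃ᶠ n in atTop,
      (b : EReal) < ((wSum T w f n x / wSum T w g n x : ℝ) : EReal) :=
    frequently_lt_of_lt_limsup (by isBoundedDefault) hb
  have h2 : ∀ᶠ n in atTop, 0 < wSum T w g n x := hdivx.eventually_gt_atTop 0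
  obtain ⟨n, hn1, hn2⟩ := (h1.and_eventually h2).exists
  rw [EReal.coe_lt_coe_iff] at hn1
  refine ⟨n, ?_⟩
  rw [wSum_sub]
  have := (lt_div_iff₀ hn2).1 hn1
  linarith

end Phi
noncomputable def PsiInf {X : Type*} (T : X → X) (w f g : X → ℝ) (x : X) : EReal :=
  Filter.liminf (fun n => ((wSum T w f n x / wSum T w g n x : ℝ) : EReal)) Filter.atTop

section Ineq
open Filter MeasureTheory
variable {X : Type*} [MeasurableSpace X] {T : X → X} {f g w : X → ℝ}
  {μ : MeasureTheory.Measure X}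

lemma psiInf_eq_neg (x : X) : PsiInf T w f g x = - PhiSup T w (fun y => -f y) g x := by
  rw [phiSup_neg, neg_neg]; rfl

lemma psiInf_le_phiSup (x : X) : PsiInf T w f g x ≤ PhiSup T w f g x :=
  liminf_le_limsup

lemma psiInf_comp (hw : ∀ x, 0 < w x) {x : X}
    (hdivx : Tendsto (fun n => wSum T w g n x) atTop atTop) :
    PsiInf T w f g (T x) = PsiInf T w f g x := by
  rw [psiInf_eq_neg, psiInf_eq_neg, phiSup_comp hw hdivx]

lemma measurable_psiInf (hT : Measurable T) (hwm : Measurable w)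
    (hf : Measurable f) (hgm : Measurable g) : Measurable (PsiInf T w f g) :=
  Measurable.liminf fun n =>
    measurable_coe_real_ereal.comp
      ((measurable_wSum hT hwm hf n).div (measurable_wSum hT hwm hgm n))

lemma psiInf_lt_iff {d : ℝ} {x : X} :
    PsiInf T w f g x < (d : EReal) ↔ ((-d : ℝ) : EReal) < PhiSup T w (fun y => -f y) g x := by
  rw [psiInf_eq_neg, EReal.coe_neg, EReal.neg_lt_comm]

lemma g_integral_zero_null (hg : ∀ x, 0 < g x) (hgint : Integrable g μ)
    {A : Set X} (h : ∫ x in A, g x ∂μ = 0) : μ A = 0 := by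
  have h2 := (integral_eq_zero_iff_of_nonneg_ae
    (Filter.Eventually.of_forall fun x => (hg x).le) hgint.integrableOn).1 h
  rw [Filter.EventuallyEq, ae_iff] at h2
  simp only [Pi.zero_apply] at h2
  have he : {x | ¬ g x = 0} = Set.univ := Set.eq_univ_of_forall fun x => (hg x).ne'
  rw [he, Measure.restrict_apply_univ] at h2
  exact h2

variable (hT : Measurable T) (hf : Measurable f) (hgm : Measurable g)
  (hwm : Measurable w) (hg : ∀ x, 0 < g x) (hw : ∀ x, 0 < w x)
  (hdiv : ∀ x, Tendsto (fun n : ℕ => wSum T w g n x) atTop atTop)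
  (hinv : IsTWInvariant T w μ) (hfint : Integrable f μ) (hgint : Integrable g μ)

include hT hf hgm hwm hw hdiv hinv hfint hgint in
lemma integral_ge_of_lt_phiSup {A : Set X} (hA : MeasurableSet A) (hAinv : T ⁻¹' A = A)
    {b : ℝ} (hsub : ∀ x ∈ A, (b : EReal) < PhiSup T w f g x) :
    b * ∫ x in A, g x ∂μ ≤ ∫ x in A, f x ∂μ := by
  have hFm : Measurable fun y => f y - b * g y := hf.sub (hgm.const_mul b)
  have hFi : Integrable (fun y => f y - b * g y) μ := hfint.sub (hgint.const_mul b)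
  have h := hopf_invariant hT hwm hw hinv hFm hFi hA hAinv
    (fun x hx => exists_pos_of_lt_phiSup (hsub x hx) (hdiv x))
  rw [integral_sub hfint.integrableOn (hgint.const_mul b).integrableOn,
    integral_const_mul] at h
  linarith

include hT hf hgm hwm hg hw hdiv hinv hfint hgint in
lemma integral_ge_of_le_phiSup {A : Set X} (hA : MeasurableSet A) (hAinv : T ⁻¹' A = A)
    {c : ℝ} (hsub : ∀ x ∈ A, (c : EReal) ≤ PhiSup T w f g x) :
    c * ∫ x in A, g x ∂μ ≤ ∫ x in A, f x ∂μ := by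
  by_cases hG : ∫ x in A, g x ∂μ = 0
  · have hA0 : μ A = 0 := g_integral_zero_null hg hgint hG
    rw [hG, Measure.restrict_eq_zero.2 hA0, integral_zero_measure, mul_zero]
  · have hGpos : 0 < ∫ x in A, g x ∂μ :=
      lt_of_le_of_ne (setIntegral_nonneg hA fun x _ => (hg x).le) (Ne.symm hG)
    refine le_of_forall_pos_le_add fun e he => ?_
    have hstep := integral_ge_of_lt_phiSup hT hf hgm hwm hw hdiv hinv hfint hgint hA hAinv
      (b := c - e / ∫ x in A, g x ∂μ) (fun x hx =>
        lt_of_lt_of_le (EReal.coe_lt_coe_iff.2 (by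
          have : 0 < e / ∫ x in A, g x ∂μ := div_pos he hGpos
          linarith)) (hsub x hx))
    have hc : (e / ∫ x in A, g x ∂μ) * ∫ x in A, g x ∂μ = e := div_mul_cancel₀ e hG
    nlinarith

include hT hf hgm hwm hw hdiv hinv hfint hgint in
lemma integral_le_of_psiInf_lt {A : Set X} (hA : MeasurableSet A) (hAinv : T ⁻¹' A = A)
    {d : ℝ} (hsub : ∀ x ∈ A, PsiInf T w f g x < (d : EReal)) :
    ∫ x in A, f x ∂μ ≤ d * ∫ x in A, g x ∂μ := by
  have h := integral_ge_of_lt_phiSup hT hf.neg hgm hwm hw hdiv hinv hfint.neg hgint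
    hA hAinv (b := -d) (fun x hx => psiInf_lt_iff.1 (hsub x hx))
  simp only [Pi.neg_apply, integral_neg] at h
  linarith

include hT hf hgm hwm hg hw hdiv hinv hfint hgint in
lemma phiSup_top_null : μ {x | PhiSup T w f g x = ⊤} = 0 := by
  set A := {x | PhiSup T w f g x = ⊤} with hAdef
  have hA : MeasurableSet A :=
    (measurable_phiSup hT hwm hf hgm) (measurableSet_singleton ⊤)
  have hAinv : T ⁻¹' A = A := by
    ext x
    simp only [hAdef, Set.mem_preimage, Set.mem_setOf_eq, phiSup_comp hw (hdiv x)]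
  have hb : ∀ b : ℝ, b * ∫ x in A, g x ∂μ ≤ ∫ x in A, f x ∂μ := fun b =>
    integral_ge_of_lt_phiSup hT hf hgm hwm hw hdiv hinv hfint hgint hA hAinv
      (fun x hx => by rw [show PhiSup T w f g x = ⊤ from hx]; exact EReal.coe_lt_top b)
  have hG0 : ∫ x in A, g x ∂μ = 0 := by
    by_contra hG
    have hGpos : 0 < ∫ x in A, g x ∂μ :=
      lt_of_le_of_ne (setIntegral_nonneg hA fun x _ => (hg x).le) (Ne.symm hG)
    have h2 := hb ((∫ x in A, f x ∂μ) / (∫ x in A, g x ∂μ) + 1)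
    have hc : ((∫ x in A, f x ∂μ) / (∫ x in A, g x ∂μ)) * ∫ x in A, g x ∂μ
        = ∫ x in A, f x ∂μ := div_mul_cancel₀ _ hG
    nlinarith
  exact g_integral_zero_null hg hgint hG0

include hT hf hgm hwm hg hw hdiv hinv hfint hgint in
lemma gap_null {a b : ℝ} (hab : a < b) :
    μ {x | PsiInf T w f g x < (a : EReal) ∧ (b : EReal) < PhiSup T w f g x} = 0 := by
  set A := {x | PsiInf T w f g x < (a : EReal) ∧ (b : EReal) < PhiSup T w f g x} with hAdef
  have hA : MeasurableSet A := by
    rw [hAdef, Set.setOf_and]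
    exact (measurableSet_lt (measurable_psiInf hT hwm hf hgm) measurable_const).inter
      (measurableSet_lt measurable_const (measurable_phiSup hT hwm hf hgm))
  have hAinv : T ⁻¹' A = A := by
    ext x
    simp only [hAdef, Set.mem_preimage, Set.mem_setOf_eq, phiSup_comp hw (hdiv x),
      psiInf_comp hw (hdiv x)]
  have h1 : b * ∫ x in A, g x ∂μ ≤ ∫ x in A, f x ∂μ :=
    integral_ge_of_lt_phiSup hT hf hgm hwm hw hdiv hinv hfint hgint hA hAinv
      (fun x hx => hx.2)
  have h2 : ∫ x in A, f x ∂μ ≤ a * ∫ x in A, g x ∂μ :=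
    integral_le_of_psiInf_lt hT hf hgm hwm hw hdiv hinv hfint hgint hA hAinv
      (fun x hx => hx.1)
  have hGn : 0 ≤ ∫ x in A, g x ∂μ := setIntegral_nonneg hA fun x _ => (hg x).le
  have hG0 : ∫ x in A, g x ∂μ = 0 := le_antisymm (by nlinarith) hGn
  exact g_integral_zero_null hg hgint hG0

end Ineq
def slabSet {X : Type*} (T : X → X) (w f g : X → ℝ) (ε : ℝ) (k : ℤ) : Set X :=
  {x | (((k : ℝ) * ε : ℝ) : EReal) ≤ PhiSup T w f g x ∧
    PhiSup T w f g x < ((((k : ℝ) + 1) * ε : ℝ) : EReal)}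

section Slab
open Filter MeasureTheory
variable {X : Type*} [MeasurableSpace X] {T : X → X} {f g w : X → ℝ}
  {μ : MeasureTheory.Measure X} {ε : ℝ}

lemma slab_meas (hT : Measurable T) (hf : Measurable f) (hgm : Measurable g)
    (hwm : Measurable w) (ε : ℝ) (k : ℤ) : MeasurableSet (slabSet T w f g ε k) := by
  have hΦ := measurable_phiSup (f := f) (g := g) hT hwm hf hgm
  rw [slabSet, Set.setOf_and]
  exact (measurableSet_le measurable_const hΦ).inter (measurableSet_lt hΦ measurable_const)

lemma slab_inv (hw : ∀ x, 0 < w x)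
    (hdiv : ∀ x, Tendsto (fun n : ℕ => wSum T w g n x) atTop atTop) (ε : ℝ) (k : ℤ) :
    T ⁻¹' (slabSet T w f g ε k) = slabSet T w f g ε k := by
  ext x
  simp only [slabSet, Set.mem_preimage, Set.mem_setOf_eq, phiSup_comp hw (hdiv x)]

lemma slab_disjoint (hε : 0 < ε) :
    Pairwise (Function.onFun Disjoint (slabSet T w f g ε)) := by
  have key : ∀ k l : ℤ, k < l → Disjoint (slabSet T w f g ε k) (slabSet T w f g ε l) := by
    intro k l hkl
    rw [Set.disjoint_left]
    rintro x ⟨_, hk2⟩ ⟨hl1, _⟩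
    have hle : ((k : ℝ) + 1) * ε ≤ (l : ℝ) * ε := by
      have : (k : ℝ) + 1 ≤ (l : ℝ) := by exact_mod_cast hkl
      nlinarith
    exact absurd (lt_of_lt_of_le hk2 (le_trans (EReal.coe_le_coe_iff.2 hle) hl1))
      (lt_irrefl _)
  intro k l hkl
  rcases lt_or_gt_of_ne hkl with h | h
  · exact key k l h
  · exact (key l k h).symm

lemma slab_iUnion (hε : 0 < ε) :
    ⋃ k : ℤ, slabSet T w f g ε k
      = {x | PhiSup T w f g x ≠ ⊥ ∧ PhiSup T w f g x ≠ ⊤} := by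
  ext x
  simp only [Set.mem_iUnion, Set.mem_setOf_eq, slabSet]
  constructor
  · rintro ⟨k, hk1, hk2⟩
    constructor
    · intro hbot
      rw [hbot] at hk1
      exact absurd (le_bot_iff.1 hk1) (EReal.coe_ne_bot _)
    · intro htop
      rw [htop] at hk2
      exact absurd hk2 (not_lt_of_ge le_top)
  · rintro ⟨hbot, htop⟩
    set r := (PhiSup T w f g x).toReal with hr
    have hΦ : PhiSup T w f g x = (r : EReal) := (EReal.coe_toReal htop hbot).symm
    refine ⟨⌊r / ε⌋, ?_, ?_⟩
    · rw [hΦ]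
      refine EReal.coe_le_coe_iff.2 ?_
      have := Int.floor_le (r / ε)
      exact (le_div_iff₀ hε).1 this
    · rw [hΦ]
      refine EReal.coe_lt_coe_iff.2 ?_
      have := Int.lt_floor_add_one (r / ε)
      exact (div_lt_iff₀ hε).1 this

lemma slab_L_bounds (ε : ℝ) (k : ℤ) {x : X} (hx : x ∈ slabSet T w f g ε k) :
    (k : ℝ) * ε ≤ (PhiSup T w f g x).toReal ∧
      (PhiSup T w f g x).toReal ≤ ((k : ℝ) + 1) * ε := by
  obtain ⟨h1, h2⟩ := hx
  have hnt : PhiSup T w f g x ≠ ⊤ := h2.ne_top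
  have hnb : PhiSup T w f g x ≠ ⊥ := by
    intro hbot
    rw [hbot] at h1
    exact absurd (le_bot_iff.1 h1) (EReal.coe_ne_bot _)
  constructor
  · have := EReal.toReal_le_toReal h1 (EReal.coe_ne_bot _) hnt
    rwa [EReal.toReal_coe] at this
  · have := EReal.toReal_le_toReal h2.le hnb (EReal.coe_ne_top _)
    rwa [EReal.toReal_coe] at this

variable (hT : Measurable T) (hf : Measurable f) (hgm : Measurable g)
  (hwm : Measurable w) (hg : ∀ x, 0 < g x) (hw : ∀ x, 0 < w x)
  (hdiv : ∀ x, Tendsto (fun n : ℕ => wSum T w g n x) atTop atTop)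
  (hinv : IsTWInvariant T w μ) (hfint : Integrable f μ) (hgint : Integrable g μ)

include hT hf hgm hwm hg hw hdiv hinv hfint hgint in
lemma slab_lower (ε : ℝ) (k : ℤ) :
    (k : ℝ) * ε * ∫ x in slabSet T w f g ε k, g x ∂μ
      ≤ ∫ x in slabSet T w f g ε k, f x ∂μ :=
  integral_ge_of_le_phiSup hT hf hgm hwm hg hw hdiv hinv hfint hgint
    (slab_meas hT hf hgm hwm ε k) (slab_inv hw hdiv ε k) (fun _ hx => hx.1)

include hT hf hgm hwm hg hw hdiv hinv hfint hgint in
lemma slab_upper (ε : ℝ) (k : ℤ) :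
    ∫ x in slabSet T w f g ε k, f x ∂μ
      ≤ ((k : ℝ) + 1) * ε * ∫ x in slabSet T w f g ε k, g x ∂μ :=
  integral_le_of_psiInf_lt hT hf hgm hwm hw hdiv hinv hfint hgint
    (slab_meas hT hf hgm hwm ε k) (slab_inv hw hdiv ε k)
    (fun x hx => lt_of_le_of_lt (psiInf_le_phiSup x) hx.2)

include hT hf hgm hwm hg hw hdiv hinv hfint hgint in
lemma slab_restrict (hε : 0 < ε) :
    μ.restrict (⋃ k : ℤ, slabSet T w f g ε k) = μ := by
  have hnull : μ (⋃ k : ℤ, slabSet T w f g ε k)ᶜ = 0 := by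
    rw [slab_iUnion hε]
    refine measure_mono_null (fun x hx => ?_)
      (measure_union_null
        (phiSup_top_null hT hf.neg hgm hwm hg hw hdiv hinv hfint.neg hgint)
        (phiSup_top_null hT hf hgm hwm hg hw hdiv hinv hfint hgint))
    simp only [Set.mem_compl_iff, Set.mem_setOf_eq, not_and_or, not_not] at hx
    rcases hx with hbot | htop
    · left
      show PhiSup T w (fun y => -f y) g x = ⊤
      have hψ : PsiInf T w f g x = ⊥ :=
        le_bot_iff.1 (hbot ▸ psiInf_le_phiSup x)
      rw [psiInf_eq_neg] at hψ
      exact EReal.neg_eq_bot_iff.1 hψ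
    · exact Or.inr htop
  calc μ.restrict (⋃ k : ℤ, slabSet T w f g ε k)
      = μ.restrict Set.univ := Measure.restrict_congr_set (ae_eq_univ.2 hnull)
    _ = μ := Measure.restrict_univ

end Slab
section Final
open Filter MeasureTheory
variable {X : Type*} [MeasurableSpace X] {T : X → X} {f g w : X → ℝ}
  {μ : MeasureTheory.Measure X}

variable (hT : Measurable T) (hf : Measurable f) (hgm : Measurable g)
  (hwm : Measurable w) (hg : ∀ x, 0 < g x) (hw : ∀ x, 0 < w x)
  (hdiv : ∀ x, Tendsto (fun n : ℕ => wSum T w g n x) atTop atTop)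
  (hinv : IsTWInvariant T w μ) (hfint : Integrable f μ) (hgint : Integrable g μ)

include hT hf hgm hwm hg hw hdiv hinv hfint hgint in
lemma integrable_gL : Integrable (fun x => g x * (PhiSup T w f g x).toReal) μ := by
  set L : X → ℝ := fun x => (PhiSup T w f g x).toReal with hLdef
  have hLm : Measurable L := (measurable_phiSup hT hwm hf hgm).ereal_toReal
  set A := slabSet T w f g 1 with hAdef
  have hAm : ∀ k : ℤ, MeasurableSet (A k) := fun k => slab_meas hT hf hgm hwm 1 k
  have hdisj : Pairwise (Function.onFun Disjoint A) := slab_disjoint one_pos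
  have hres : μ.restrict (⋃ k : ℤ, A k) = μ :=
    slab_restrict hT hf hgm hwm hg hw hdiv hinv hfint hgint one_pos
  have hGnn : ∀ k : ℤ, 0 ≤ ∫ x in A k, g x ∂μ := fun k =>
    setIntegral_nonneg (hAm k) fun x _ => (hg x).le
  have hInn : ∀ k : ℤ, 0 ≤ ∫ x in A k, |f x| ∂μ := fun k =>
    setIntegral_nonneg (hAm k) fun x _ => abs_nonneg _
  have habsF : ∀ k : ℤ, |∫ x in A k, f x ∂μ| ≤ ∫ x in A k, |f x| ∂μ := fun k => by
    simpa [Real.norm_eq_abs] using norm_integral_le_integral_norm (μ := μ.restrict (A k)) f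
  have hkey : ∀ k : ℤ, (|(k : ℝ)| + 2) * ∫ x in A k, g x ∂μ
      ≤ (∫ x in A k, |f x| ∂μ) + 3 * ∫ x in A k, g x ∂μ := by
    intro k
    have h1 := slab_lower hT hf hgm hwm hg hw hdiv hinv hfint hgint 1 k
    have h2 := slab_upper hT hf hgm hwm hg hw hdiv hinv hfint hgint 1 k
    have h3 := habsF k
    rw [mul_one] at h1 h2
    rcases le_or_gt 0 (k : ℝ) with hk | hk
    · rw [abs_of_nonneg hk]
      nlinarith [hGnn k, (abs_le.1 h3).2]
    · rw [abs_of_neg hk]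
      nlinarith [hGnn k, (abs_le.1 h3).1]
  have hpt : ∀ k : ℤ, ∀ x ∈ A k, ‖g x * L x‖ ≤ (|(k : ℝ)| + 2) * g x := by
    intro k x hx
    obtain ⟨hb1, hb2⟩ := slab_L_bounds 1 k hx
    rw [mul_one] at hb1 hb2
    have hLb : |L x| ≤ |(k : ℝ)| + 2 := by
      rw [abs_le]
      constructor
      · have := neg_abs_le (k : ℝ); linarith
      · have := le_abs_self (k : ℝ); linarith
    rw [Real.norm_eq_abs, abs_mul, abs_of_pos (hg x), mul_comm]
    exact mul_le_mul_of_nonneg_right hLb (hg x).le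
  refine ⟨(hgm.mul hLm).aestronglyMeasurable, ?_⟩
  rw [hasFiniteIntegral_iff_norm]
  have e1 : ∫⁻ x, ENNReal.ofReal ‖g x * L x‖ ∂μ
      = ∫⁻ x in ⋃ k : ℤ, A k, ENNReal.ofReal ‖g x * L x‖ ∂μ := by rw [hres]
  have e2 : ∫⁻ x in ⋃ k : ℤ, A k, ENNReal.ofReal ‖g x * L x‖ ∂μ
      = ∑' k : ℤ, ∫⁻ x in A k, ENNReal.ofReal ‖g x * L x‖ ∂μ :=
    lintegral_iUnion hAm hdisj _
  have e3 : ∀ k : ℤ, ∫⁻ x in A k, ENNReal.ofReal ‖g x * L x‖ ∂μ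
      ≤ ENNReal.ofReal (∫ x in A k, |f x| ∂μ)
        + ENNReal.ofReal (3 * ∫ x in A k, g x ∂μ) := by
    intro k
    have step1 : ∫⁻ x in A k, ENNReal.ofReal ‖g x * L x‖ ∂μ
        ≤ ∫⁻ x in A k, ENNReal.ofReal ((|(k : ℝ)| + 2) * g x) ∂μ :=
      setLIntegral_mono' (hAm k) fun x hx => ENNReal.ofReal_le_ofReal (hpt k x hx)
    have step2 : ∫⁻ x in A k, ENNReal.ofReal ((|(k : ℝ)| + 2) * g x) ∂μ
        = ENNReal.ofReal ((|(k : ℝ)| + 2) * ∫ x in A k, g x ∂μ) := by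
      rw [← ofReal_integral_eq_lintegral_ofReal ((hgint.const_mul _).integrableOn)
        (Filter.Eventually.of_forall fun x =>
          mul_nonneg (by positivity) (hg x).le),
        integral_const_mul]
    calc ∫⁻ x in A k, ENNReal.ofReal ‖g x * L x‖ ∂μ
        ≤ ENNReal.ofReal ((|(k : ℝ)| + 2) * ∫ x in A k, g x ∂μ) := step1.trans step2.le
      _ ≤ ENNReal.ofReal ((∫ x in A k, |f x| ∂μ) + 3 * ∫ x in A k, g x ∂μ) :=
          ENNReal.ofReal_le_ofReal (hkey k)
      _ = ENNReal.ofReal (∫ x in A k, |f x| ∂μ)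
            + ENNReal.ofReal (3 * ∫ x in A k, g x ∂μ) :=
          ENNReal.ofReal_add (hInn k) (mul_nonneg (by norm_num) (hGnn k))
  have e4 : ∑' k : ℤ, ENNReal.ofReal (∫ x in A k, |f x| ∂μ)
      = ∫⁻ x in ⋃ k : ℤ, A k, ENNReal.ofReal |f x| ∂μ := by
    rw [tsum_congr fun k : ℤ =>
      ofReal_integral_eq_lintegral_ofReal hfint.abs.integrableOn
        (Filter.Eventually.of_forall fun x => abs_nonneg _),
      ← lintegral_iUnion hAm hdisj]
  have e5 : ∑' k : ℤ, ENNReal.ofReal (3 * ∫ x in A k, g x ∂μ)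
      = ∫⁻ x in ⋃ k : ℤ, A k, ENNReal.ofReal (3 * g x) ∂μ := by
    rw [tsum_congr fun k : ℤ => ?_, ← lintegral_iUnion hAm hdisj]
    rw [← integral_const_mul]
    exact ofReal_integral_eq_lintegral_ofReal ((hgint.const_mul 3).integrableOn)
      (Filter.Eventually.of_forall fun x => mul_nonneg (by norm_num) (hg x).le)
  have hfin1 : ∫⁻ x in ⋃ k : ℤ, A k, ENNReal.ofReal |f x| ∂μ < ⊤ := by
    rw [hres]
    exact (hasFiniteIntegral_iff_ofReal
      (Filter.Eventually.of_forall fun x => abs_nonneg _)).1 hfint.abs.2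
  have hfin2 : ∫⁻ x in ⋃ k : ℤ, A k, ENNReal.ofReal (3 * g x) ∂μ < ⊤ := by
    rw [hres]
    exact (hasFiniteIntegral_iff_ofReal
      (Filter.Eventually.of_forall fun x => mul_nonneg (by norm_num) (hg x).le)).1
      (hgint.const_mul 3).2
  calc ∫⁻ x, ENNReal.ofReal ‖g x * L x‖ ∂μ
      = ∑' k : ℤ, ∫⁻ x in A k, ENNReal.ofReal ‖g x * L x‖ ∂μ := e1.trans e2
    _ ≤ ∑' k : ℤ, (ENNReal.ofReal (∫ x in A k, |f x| ∂μ)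
          + ENNReal.ofReal (3 * ∫ x in A k, g x ∂μ)) := ENNReal.tsum_le_tsum e3
    _ = (∑' k : ℤ, ENNReal.ofReal (∫ x in A k, |f x| ∂μ))
          + ∑' k : ℤ, ENNReal.ofReal (3 * ∫ x in A k, g x ∂μ) := ENNReal.tsum_add
    _ < ⊤ := by
        rw [e4, e5]
        exact ENNReal.add_lt_top.2 ⟨hfin1, hfin2⟩

include hT hf hgm hwm hg hw hdiv hinv hfint hgint in
lemma integral_eq_gL
    (hgl : Integrable (fun x => g x * (PhiSup T w f g x).toReal) μ) :
    ∫ x, f x ∂μ = ∫ x, g x * (PhiSup T w f g x).toReal ∂μ := by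
  set L : X → ℝ := fun x => (PhiSup T w f g x).toReal with hLdef
  have key : ∀ ε : ℝ, 0 < ε →
      |∫ x, f x ∂μ - ∫ x, g x * L x ∂μ| ≤ ε * ∫ x, g x ∂μ := by
    intro ε hε
    set A := slabSet T w f g ε with hAdef
    have hAm : ∀ k : ℤ, MeasurableSet (A k) := fun k => slab_meas hT hf hgm hwm ε k
    have hdisj : Pairwise (Function.onFun Disjoint A) := slab_disjoint hε
    have hres : μ.restrict (⋃ k : ℤ, A k) = μ :=
      slab_restrict hT hf hgm hwm hg hw hdiv hinv hfint hgint hε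
    have hSf : HasSum (fun k : ℤ => ∫ x in A k, f x ∂μ) (∫ x, f x ∂μ) := by
      have h := hasSum_integral_iUnion hAm hdisj
        (hfint.integrableOn : IntegrableOn f (⋃ k : ℤ, A k) μ)
      rwa [show ∫ x in ⋃ k : ℤ, A k, f x ∂μ = ∫ x, f x ∂μ by rw [hres]] at h
    have hSgl : HasSum (fun k : ℤ => ∫ x in A k, g x * L x ∂μ)
        (∫ x, g x * L x ∂μ) := by
      have h := hasSum_integral_iUnion hAm hdisj
        (hgl.integrableOn : IntegrableOn (fun x => g x * L x) (⋃ k : ℤ, A k) μ)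
      rwa [show ∫ x in ⋃ k : ℤ, A k, g x * L x ∂μ = ∫ x, g x * L x ∂μ by rw [hres]] at h
    have hSg : HasSum (fun k : ℤ => ∫ x in A k, g x ∂μ) (∫ x, g x ∂μ) := by
      have h := hasSum_integral_iUnion hAm hdisj
        (hgint.integrableOn : IntegrableOn g (⋃ k : ℤ, A k) μ)
      rwa [show ∫ x in ⋃ k : ℤ, A k, g x ∂μ = ∫ x, g x ∂μ by rw [hres]] at h
    have hb : ∀ k : ℤ, |∫ x in A k, f x ∂μ - ∫ x in A k, g x * L x ∂μ|
        ≤ ε * ∫ x in A k, g x ∂μ := by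
      intro k
      have h1 := slab_lower hT hf hgm hwm hg hw hdiv hinv hfint hgint ε k
      have h2 := slab_upper hT hf hgm hwm hg hw hdiv hinv hfint hgint ε k
      have hgl1 : (k : ℝ) * ε * ∫ x in A k, g x ∂μ ≤ ∫ x in A k, g x * L x ∂μ := by
        have hm := setIntegral_mono_on ((hgint.const_mul ((k : ℝ) * ε)).integrableOn)
          hgl.integrableOn (hAm k) (fun x hx => ?_)
        · rwa [integral_const_mul] at hm
        · have hb1 := (slab_L_bounds ε k hx).1
          have := mul_le_mul_of_nonneg_left hb1 (hg x).le
          calc (k : ℝ) * ε * g x = g x * ((k : ℝ) * ε) := by ring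
            _ ≤ g x * L x := this
      have hgl2 : ∫ x in A k, g x * L x ∂μ ≤ ((k : ℝ) + 1) * ε * ∫ x in A k, g x ∂μ := by
        have hm := setIntegral_mono_on hgl.integrableOn
          ((hgint.const_mul (((k : ℝ) + 1) * ε)).integrableOn) (hAm k) (fun x hx => ?_)
        · rwa [integral_const_mul] at hm
        · have hb2 := (slab_L_bounds ε k hx).2
          have := mul_le_mul_of_nonneg_left hb2 (hg x).le
          calc g x * L x ≤ g x * (((k : ℝ) + 1) * ε) := this
            _ = ((k : ℝ) + 1) * ε * g x := by ring
      have hdiffeq : ((k : ℝ) + 1) * ε * (∫ x in A k, g x ∂μ)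
          - (k : ℝ) * ε * (∫ x in A k, g x ∂μ) = ε * ∫ x in A k, g x ∂μ := by ring
      rw [abs_sub_le_iff]
      constructor <;> linarith
    have hSb : HasSum (fun k : ℤ => ε * ∫ x in A k, g x ∂μ) (ε * ∫ x, g x ∂μ) :=
      hSg.mul_left ε
    have hSd := hSf.sub hSgl
    have hle1 : ∫ x, f x ∂μ - ∫ x, g x * L x ∂μ ≤ ε * ∫ x, g x ∂μ :=
      hasSum_le (fun k => (abs_le.1 (hb k)).2) hSd hSb
    have hle2 : -(ε * ∫ x, g x ∂μ) ≤ ∫ x, f x ∂μ - ∫ x, g x * L x ∂μ :=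
      hasSum_le (fun k => (abs_le.1 (hb k)).1) hSb.neg hSd
    exact abs_le.2 ⟨hle2, hle1⟩
  have hC : 0 ≤ ∫ x, g x ∂μ := integral_nonneg fun x => (hg x).le
  have habs : |∫ x, f x ∂μ - ∫ x, g x * L x ∂μ| ≤ 0 := by
    refine le_of_forall_pos_le_add fun e he => ?_
    have hkey := key (e / (∫ x, g x ∂μ + 1)) (by positivity)
    have hb2 : e / (∫ x, g x ∂μ + 1) * ∫ x, g x ∂μ ≤ e := by
      rw [div_mul_eq_mul_div, div_le_iff₀ (by linarith)]
      nlinarith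
    linarith
  exact sub_eq_zero.1 (abs_nonpos_iff.1 habs)

end Final

theorem dowker_ratio_ergodic {X : Type*} [MeasurableSpace X]
    (T : X → X) (f g w : X → ℝ)
    (hT : Measurable T) (hf : Measurable f) (hgm : Measurable g)
    (hwm : Measurable w) (hg : ∀ x, 0 < g x) (hw : ∀ x, 0 < w x)
    (hdiv : ∀ x, Tendsto (fun n : ℕ => wSum T w g n x) atTop atTop)
    (μ : Measure X) (hcons : IsConservative T μ) (hinv : IsTWInvariant T w μ)
    (hfint : Integrable f μ) (hgint : Integrable g μ) :
    ∃ L : X → ℝ,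
      (∀ᵐ x ∂μ, Tendsto (fun n : ℕ => ratio T w f g n x) atTop (nhds (L x))) ∧
      Integrable (fun x => g x * L x) μ ∧
      ∫ x, f x ∂μ = ∫ x, g x * L x ∂μ := by
  have hgl := integrable_gL hT hf hgm hwm hg hw hdiv hinv hfint hgint
  refine ⟨fun x => (PhiSup T w f g x).toReal, ?_, hgl,
    integral_eq_gL hT hf hgm hwm hg hw hdiv hinv hfint hgint hgl⟩
  have hN1 := phiSup_top_null hT hf hgm hwm hg hw hdiv hinv hfint hgint
  have hN2 := phiSup_top_null hT hf.neg hgm hwm hg hw hdiv hinv hfint.neg hgint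
  set S : ℚ × ℚ → Set X := fun p =>
    {x | ((p.1 : ℝ) < (p.2 : ℝ)) ∧ PsiInf T w f g x < (((p.1 : ℝ)) : EReal) ∧
      (((p.2 : ℝ)) : EReal) < PhiSup T w f g x} with hSdef
  have hgapset : ∀ p : ℚ × ℚ, μ (S p) = 0 := by
    intro p
    by_cases hpq : (p.1 : ℝ) < (p.2 : ℝ)
    · refine measure_mono_null ?_ (gap_null hT hf hgm hwm hg hw hdiv hinv hfint hgint hpq)
      intro x hx
      exact ⟨hx.2.1, hx.2.2⟩
    · have : S p = ∅ := Set.eq_empty_iff_forall_notMem.2 fun x hx => hpq hx.1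
      rw [this]
      exact measure_empty
  have hbad : μ ({x | PhiSup T w f g x = ⊤}
      ∪ ({x | PhiSup T w (fun y => -f y) g x = ⊤} ∪ ⋃ p : ℚ × ℚ, S p)) = 0 :=
    measure_union_null hN1 (measure_union_null hN2 (measure_iUnion_null hgapset))
  filter_upwards [measure_eq_zero_iff_ae_notMem.1 hbad] with x hx
  simp only [Set.mem_union, Set.mem_iUnion, not_or, not_exists, Set.mem_setOf_eq] at hx
  obtain ⟨hx1, hx2, hx3⟩ := hx
  have hΨΦ : PsiInf T w f g x = PhiSup T w f g x := by
    refine le_antisymm (psiInf_le_phiSup x) (le_of_not_gt fun hlt => ?_)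
    obtain ⟨q, hq1, hq2⟩ := EReal.lt_iff_exists_rat_btwn.1 hlt
    obtain ⟨r, hr1, hr2⟩ := EReal.lt_iff_exists_rat_btwn.1 hq2
    exact hx3 (q, r) ⟨by exact_mod_cast EReal.coe_lt_coe_iff.1 hr1, hq1, hr2⟩
  have hnb : PhiSup T w f g x ≠ ⊥ := by
    rw [← hΨΦ]
    intro hbot
    rw [psiInf_eq_neg] at hbot
    exact hx2 (EReal.neg_eq_bot_iff.1 hbot)
  have hco : PhiSup T w f g x = (((PhiSup T w f g x).toReal : ℝ) : EReal) :=
    (EReal.coe_toReal hx1 hnb).symm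
  have htt : Tendsto (fun n => ((ratio T w f g n x : ℝ) : EReal)) atTop
      (nhds (PhiSup T w f g x)) := by
    refine tendsto_of_liminf_eq_limsup ?_ ?_
    · exact hΨΦ
    · rfl
  rw [hco] at htt
  exact EReal.tendsto_coe.1 htt
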